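/- Let ρ_s, ρ_l, R, μ_l, F_ex, α_l, q_h, h_m be positive real numbers and let q_s ≥ 0 with q_s < q_h. Define F(U) = ((ρ_s/ρ_l)·R·U)^{4/3}·(3π·μ_l/(2·F_ex))^{1/3}. Then there exists a unique U > 0 satisfying the transient power-controlled close-contact melting equation ((ρ_s·h_m·U + q_s)/q_h)·(7·F(U)/(20·α_l) + 1) + 3·F(U)/(20·α_l) − 1 = 0. -/

import Mathlib

open Real

/-- the transient power-controlled close-contact melting equation
has a unique positive solution `U`, provided `0 ≤ q_s < q_h`. -/
theorem stmt_8 (ρs ρl R μl Fex αl qh hm qs : ℝ) (F : ℝ → ℝ)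
    (hρs : 0 < ρs) (hρl : 0 < ρl) (hR : 0 < R) (hμl : 0 < μl) (hFex : 0 < Fex)
    (hαl : 0 < αl) (hqh : 0 < qh) (hhm : 0 < hm) (hqs : 0 ≤ qs) (hqsqh : qs < qh)
    (hF : ∀ U : ℝ, F U = ((ρs / ρl) * R * U) ^ ((4 : ℝ) / 3) *
      (3 * π * μl / (2 * Fex)) ^ ((1 : ℝ) / 3)) :
    ∃! U : ℝ, 0 < U ∧
      ((ρs * hm * U + qs) / qh) * (7 * F U / (20 * αl) + 1) +
        3 * F U / (20 * αl) - 1 = 0 := by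
  have hπ := Real.pi_pos
  set c : ℝ := (3 * π * μl / (2 * Fex)) ^ ((1 : ℝ) / 3) with hcdef
  have hcpos : 0 < c := Real.rpow_pos_of_pos (by positivity) _
  set a : ℝ := ρs / ρl * R with hadef
  have hapos : 0 < a := by positivity
  have hFval : ∀ U, F U = (a * U) ^ ((4 : ℝ) / 3) * c := hF
  have hFnonneg : ∀ U, 0 ≤ U → 0 ≤ F U := by
    intro U hU
    rw [hFval]
    exact mul_nonneg (Real.rpow_nonneg (by positivity) _) hcpos.le
  have hFmono : ∀ U V, 0 ≤ U → U < V → F U < F V := by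
    intro U V hU hUV
    rw [hFval, hFval]
    refine mul_lt_mul_of_pos_right ?_ hcpos
    exact Real.rpow_lt_rpow (by positivity) (by nlinarith) (by norm_num)
  have hF0 : F 0 = 0 := by
    rw [hFval, mul_zero, Real.zero_rpow (by norm_num), zero_mul]
  set g : ℝ → ℝ := fun U => ((ρs * hm * U + qs) / qh) * (7 * F U / (20 * αl) + 1) +
        3 * F U / (20 * αl) - 1 with hgdef
  -- strict monotone on Ici 0
  have hgmono : StrictMonoOn g (Set.Ici 0) := by
    intro U hU V hV hUV
    simp only [hgdef]
    have hFU := hFnonneg U hU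
    have hFUV := hFmono U V hU hUV
    have hAU : 0 ≤ ρs * hm * U + qs := by
      have h0U : (0:ℝ) ≤ U := hU
      have := mul_nonneg (mul_nonneg hρs.le hhm.le) h0U
      linarith
    have hBV : 0 < 7 * F V / (20 * αl) + 1 := by
      have := hFnonneg V (le_of_lt (lt_of_le_of_lt hU hUV))
      positivity
    have h1 : (ρs * hm * U + qs) / qh * (7 * F U / (20 * αl) + 1) ≤
        (ρs * hm * U + qs) / qh * (7 * F V / (20 * αl) + 1) := by
      apply mul_le_mul_of_nonneg_left _ (by positivity)
      have : F U ≤ F V := hFUV.le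
      gcongr
    have h2 : (ρs * hm * U + qs) / qh * (7 * F V / (20 * αl) + 1) <
        (ρs * hm * V + qs) / qh * (7 * F V / (20 * αl) + 1) := by
      apply mul_lt_mul_of_pos_right _ hBV
      refine (div_lt_div_iff_of_pos_right hqh).mpr ?_
      have := mul_pos (mul_pos hρs hhm) (sub_pos.mpr hUV)
      nlinarith
    have h3 : 3 * F U / (20 * αl) < 3 * F V / (20 * αl) := by gcongr
    linarith
  -- continuity
  have hFcont : Continuous F := by
    have : F = fun U => (a * U) ^ ((4 : ℝ) / 3) * c := funext hFval
    rw [this]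
    exact ((continuous_const.mul continuous_id).rpow_const
      (fun x => Or.inr (by norm_num))).mul continuous_const
  have hgcont : Continuous g := by
    simp only [hgdef]
    fun_prop
  -- endpoints
  have hg0 : g 0 < 0 := by
    simp only [hgdef, hF0, mul_zero, zero_mul, zero_div, mul_one, zero_add, add_zero]
    have : qs / qh < 1 := (div_lt_one hqh).mpr hqsqh
    linarith
  set U0 : ℝ := qh / (ρs * hm) with hU0def
  have hU0pos : 0 < U0 := by positivity
  have hgU0 : 0 ≤ g U0 := by
    simp only [hgdef]
    have h1 : ρs * hm * U0 = qh := by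
      rw [hU0def]; field_simp
    have hFU0 := hFnonneg U0 hU0pos.le
    have hA : 1 ≤ (ρs * hm * U0 + qs) / qh := by
      rw [le_div_iff₀ hqh]; linarith
    have hB : (0:ℝ) ≤ 7 * F U0 / (20 * αl) := by positivity
    have hC : (0:ℝ) ≤ 3 * F U0 / (20 * αl) := by positivity
    have := mul_le_mul hA (by linarith : (1:ℝ) ≤ 7 * F U0 / (20 * αl) + 1)
      zero_le_one (le_trans zero_le_one hA)
    linarith
  -- IVT
  have hsub : Set.Icc (g 0) (g U0) ⊆ g '' Set.Icc 0 U0 :=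
    intermediate_value_Icc hU0pos.le hgcont.continuousOn
  obtain ⟨U, hUmem, hgU⟩ := hsub ⟨hg0.le, hgU0⟩
  have hUpos : 0 < U := by
    rcases hUmem.1.lt_or_eq with h | h
    · exact h
    · exfalso; rw [← h] at hgU; linarith [hgU, hg0]
  refine ⟨U, ⟨hUpos, by simpa [hgdef] using hgU⟩, ?_⟩
  rintro V ⟨hVpos, hVeq⟩
  have hgV : g V = 0 := by simpa [hgdef] using hVeq
  exact hgmono.injOn (Set.mem_Ici.mpr hVpos.le) (Set.mem_Ici.mpr hUpos.le)
    (by rw [hgV, hgU])
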